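/- The function f : ({−1,1}^n × {−1,1}^n)^n → {−1,1} (the PARITY of n decoded inner-product values of Hadamard-encoded blocks, with value −1 on inputs where some block is not a signed Hadamard codeword) is transitive as a function of its 2n² Boolean input coordinates. -/
import Mathlib


/-- Encoding of a `{-1,1}`-bit by a Boolean: `true ↦ -1`, `false ↦ 1`. -/
def pm (b : Bool) : ℝ := if b then -1 else 1

/-- The inner product function `IP_m(s,t) = (−1)^{#{i : s_i = t_i = −1}}`. -/
def IP {m : ℕ} (s t : Fin m → Bool) : ℝ := ∏ i, pm (s i && t i)

/-- The Hadamard codeword of `s ∈ {−1,1}^m`: the string in `{−1,1}^{2^m}`, indexed by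
`t ∈ {−1,1}^m`, whose `t`-entry is `∏_{i : s_i = −1} t_i`. -/
def Had {m : ℕ} (s : Fin m → Bool) (t : Fin m → Bool) : ℝ :=
  ∏ i, if s i then pm (t i) else 1

/-- `x ∈ {H(s), −H(s)}` for the string `x ∈ {−1,1}^{2^m}` (indexed by `{−1,1}^m`). -/
def IsHadCodeword {m : ℕ} (x : (Fin m → Bool) → Bool) (s : Fin m → Bool) : Prop :=
  (∀ t, pm (x t) = Had s t) ∨ (∀ t, pm (x t) = -Had s t)

/-- A function of its input coordinates (indexed by `ι`) is transitive if for all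
coordinates `i, j` there is a permutation `σ` of the coordinates with `σ i = j` under
which the function is invariant. -/
def IsTransitiveFn {ι α β : Type*} (F : (ι → α) → β) : Prop :=
  ∀ i j : ι, ∃ σ : Equiv.Perm ι, σ i = j ∧ ∀ x : ι → α, F (fun a => x (σ a)) = F x

lemma pm_sq (b : Bool) : pm b * pm b = 1 := by cases b <;> simp [pm]
lemma pm_xor (p q : Bool) : pm (xor p q) = pm p * pm q := by
  cases p <;> cases q <;> simp [pm]
lemma IP_comm {m : ℕ} (s t : Fin m → Bool) : IP s t = IP t s := by
  simp [IP, Bool.and_comm]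
lemma Had_xor {m : ℕ} (s t a : Fin m → Bool) :
    Had s (fun k => xor (t k) (a k)) = Had s t * Had s a := by
  unfold Had
  rw [← Finset.prod_mul_distrib]
  exact Finset.prod_congr rfl fun i _ => by by_cases hs : s i <;> simp [hs, pm_xor]
lemma Had_sq {m : ℕ} (s a : Fin m → Bool) : Had s a * Had s a = 1 := by
  unfold Had
  rw [← Finset.prod_mul_distrib]
  exact Finset.prod_eq_one fun i _ => by by_cases hs : s i <;> simp [hs, pm_sq]
lemma codeword_shift {m : ℕ} {x : (Fin m → Bool) → Bool} {s : Fin m → Bool} (a : Fin m → Bool)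
    (hx : IsHadCodeword x s) :
    IsHadCodeword (fun u => x (fun k => xor (u k) (a k))) s := by
  rcases mul_self_eq_one_iff.mp (Had_sq s a) with ha | ha
  · rcases hx with hx | hx
    · exact Or.inl fun t => by rw [hx, Had_xor, ha, mul_one]
    · exact Or.inr fun t => by rw [hx, Had_xor, ha, mul_one]
  · rcases hx with hx | hx
    · exact Or.inr fun t => by rw [hx, Had_xor, ha]; ring
    · exact Or.inl fun t => by rw [hx, Had_xor, ha]; ring
lemma codeword_shift_iff {m : ℕ} (x : (Fin m → Bool) → Bool) (a : Fin m → Bool) :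
    (∃ s, IsHadCodeword (fun u => x (fun k => xor (u k) (a k))) s) ↔ ∃ s, IsHadCodeword x s := by
  constructor
  · rintro ⟨s, hs⟩
    exact ⟨s, by simpa [Bool.xor_assoc] using codeword_shift a hs⟩
  · rintro ⟨s, hs⟩
    exact ⟨s, codeword_shift a hs⟩

/-- The decoded value of block `i`. -/
def Hb {m : ℕ} (h : ((Fin m → Bool) → Bool) → ((Fin m → Bool) → Bool) → ℝ)
    (z : Fin (2 ^ m) × ((Fin m → Bool) ⊕ (Fin m → Bool)) → Bool) (i : Fin (2 ^ m)) : ℝ :=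
  h (fun t => z (i, Sum.inl t)) (fun t => z (i, Sum.inr t))

/-- Let `n = 2^m`, let `h̃` be the partial inner-product-of-Hadamard-codewords function
(value `IP_m(s,t)` when the two halves are signed Hadamard codewords `±H(s), ±H(t)`,
and `0` otherwise), and let `f` on input `(X_1,Y_1,…,X_n,Y_n)` equal
`∏_{i=1}^n h̃(X_i,Y_i)` when all `h̃(X_i,Y_i) ≠ 0`, and `−1` otherwise (i.e. `f` is the
PARITY of the `n` decoded inner-product values). Then `f` is transitive as a function
of its `2n²` Boolean input coordinates. -/
theorem stmt_9 (m : ℕ) (hm : 1 ≤ m)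
    (h : ((Fin m → Bool) → Bool) → ((Fin m → Bool) → Bool) → ℝ)
    (hcode : ∀ x y s t, IsHadCodeword x s → IsHadCodeword y t → h x y = IP s t)
    (hstar : ∀ x y,
      ((¬ ∃ s, IsHadCodeword x s) ∨ (¬ ∃ t, IsHadCodeword y t)) → h x y = 0)
    (F : ((Fin (2 ^ m) × ((Fin m → Bool) ⊕ (Fin m → Bool))) → Bool) → ℝ)
    (hF1 : ∀ z, (∀ i : Fin (2 ^ m),
        h (fun t => z (i, Sum.inl t)) (fun t => z (i, Sum.inr t)) ≠ 0) →
      F z = ∏ i : Fin (2 ^ m),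
        h (fun t => z (i, Sum.inl t)) (fun t => z (i, Sum.inr t)))
    (hF2 : ∀ z, (∃ i : Fin (2 ^ m),
        h (fun t => z (i, Sum.inl t)) (fun t => z (i, Sum.inr t)) = 0) →
      F z = -1) :
    IsTransitiveFn F := by
  classical
  have hF1' : ∀ z, (∀ i, Hb h z i ≠ 0) → F z = ∏ i, Hb h z i := hF1
  have hF2' : ∀ z, (∃ i, Hb h z i = 0) → F z = -1 := hF2
  -- symmetry of h
  have hsymm : ∀ x y, h x y = h y x := by
    intro x y
    by_cases hx : ∃ s, IsHadCodeword x s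
    · by_cases hy : ∃ t, IsHadCodeword y t
      · obtain ⟨s, hs⟩ := hx; obtain ⟨t, ht⟩ := hy
        rw [hcode x y s t hs ht, hcode y x t s ht hs, IP_comm]
      · rw [hstar x y (Or.inr hy), hstar y x (Or.inl hy)]
    · rw [hstar x y (Or.inl hx), hstar y x (Or.inr hx)]
  -- translation invariance of h
  have hshiftL : ∀ x y (a : Fin m → Bool),
      h (fun u => x (fun k => xor (u k) (a k))) y = h x y := by
    intro x y a
    by_cases hx : ∃ s, IsHadCodeword x s
    · obtain ⟨s, hs⟩ := hx
      by_cases hy : ∃ t, IsHadCodeword y t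
      · obtain ⟨t, ht⟩ := hy
        rw [hcode _ y s t (codeword_shift a hs) ht, hcode x y s t hs ht]
      · rw [hstar _ y (Or.inr hy), hstar x y (Or.inr hy)]
    · rw [hstar _ y (Or.inl (by rwa [codeword_shift_iff])), hstar x y (Or.inl hx)]
  have hshiftR : ∀ x y (a : Fin m → Bool),
      h x (fun u => y (fun k => xor (u k) (a k))) = h x y := by
    intro x y a
    rw [hsymm, hshiftL, hsymm]
  -- key invariance principle
  have key : ∀ (σ : Equiv.Perm (Fin (2 ^ m) × ((Fin m → Bool) ⊕ (Fin m → Bool))))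
      (π : Equiv.Perm (Fin (2 ^ m))),
      (∀ z i, Hb h (fun a => z (σ a)) i = Hb h z (π i)) →
      ∀ z, F (fun a => z (σ a)) = F z := by
    intro σ π hσ z
    by_cases h0 : ∃ i, Hb h z i = 0
    · obtain ⟨i0, hi0⟩ := h0
      rw [hF2' z ⟨i0, hi0⟩]
      refine hF2' _ ⟨π.symm i0, ?_⟩
      rw [hσ z (π.symm i0), Equiv.apply_symm_apply]
      exact hi0
    · push_neg at h0
      have h0' : ∀ i, Hb h (fun a => z (σ a)) i ≠ 0 := fun i => by
        rw [hσ]; exact h0 _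
      rw [hF1' z h0, hF1' _ h0']
      calc (∏ i, Hb h (fun a => z (σ a)) i) = ∏ i, Hb h z (π i) :=
            Finset.prod_congr rfl fun i _ => hσ z i
        _ = ∏ i, Hb h z i := Equiv.prod_comp π (Hb h z)
  -- generator 1 : permuting blocks
  have gen1 : ∀ π : Equiv.Perm (Fin (2 ^ m)),
      ∃ σ : Equiv.Perm (Fin (2 ^ m) × ((Fin m → Bool) ⊕ (Fin m → Bool))),
        (∀ p, σ p = (π p.1, p.2)) ∧ ∀ z, F (fun a => z (σ a)) = F z := by
    intro π
    exact ⟨π.prodCongr (Equiv.refl _), fun p => rfl, key _ π fun z i => rfl⟩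
  -- generator 2 : swapping the two halves of one block
  have gen2 : ∀ i0 : Fin (2 ^ m),
      ∃ σ : Equiv.Perm (Fin (2 ^ m) × ((Fin m → Bool) ⊕ (Fin m → Bool))),
        (∀ p, σ p = if p.1 = i0 then (p.1, p.2.swap) else p) ∧
        ∀ z, F (fun a => z (σ a)) = F z := by
    intro i0
    have hinv : Function.Involutive
        (fun p : Fin (2 ^ m) × ((Fin m → Bool) ⊕ (Fin m → Bool)) =>
          if p.1 = i0 then (p.1, p.2.swap) else p) := by
      rintro ⟨i, u⟩
      by_cases hp : i = i0
      · subst hp; simp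
      · simp [hp]
    refine ⟨hinv.toPerm _, fun p => rfl, key _ (Equiv.refl _) fun z i => ?_⟩
    by_cases hi : i = i0
    · subst hi
      have e1 : ∀ t, z (hinv.toPerm _ (i, Sum.inl t)) = z (i, Sum.inr t) := by
        intro t; simp [Function.Involutive.toPerm]
      have e2 : ∀ t, z (hinv.toPerm _ (i, Sum.inr t)) = z (i, Sum.inl t) := by
        intro t; simp [Function.Involutive.toPerm]
      simp only [Hb, e1, e2]
      exact hsymm _ _
    · have e1 : ∀ t, z (hinv.toPerm _ (i, Sum.inl t)) = z (i, Sum.inl t) := by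
        intro t; simp [Function.Involutive.toPerm, hi]
      have e2 : ∀ t, z (hinv.toPerm _ (i, Sum.inr t)) = z (i, Sum.inr t) := by
        intro t; simp [Function.Involutive.toPerm, hi]
      simp only [Hb, e1, e2, Equiv.refl_apply]
  -- generator 3 : xor-translating both halves of one block
  have gen3 : ∀ (i0 : Fin (2 ^ m)) (a : Fin m → Bool),
      ∃ σ : Equiv.Perm (Fin (2 ^ m) × ((Fin m → Bool) ⊕ (Fin m → Bool))),
        (∀ p, σ p = if p.1 = i0
            then (p.1, Sum.map (fun t k => xor (t k) (a k)) (fun t k => xor (t k) (a k)) p.2)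
            else p) ∧
        ∀ z, F (fun a => z (σ a)) = F z := by
    intro i0 a
    have hinv : Function.Involutive
        (fun p : Fin (2 ^ m) × ((Fin m → Bool) ⊕ (Fin m → Bool)) =>
          if p.1 = i0
          then (p.1, Sum.map (fun t k => xor (t k) (a k)) (fun t k => xor (t k) (a k)) p.2)
          else p) := by
      rintro ⟨i, u⟩
      by_cases hp : i = i0
      · subst hp
        rcases u with t | t <;> simp [Bool.xor_assoc]
      · simp [hp]
    refine ⟨hinv.toPerm _, fun p => rfl, key _ (Equiv.refl _) fun z i => ?_⟩
    by_cases hi : i = i0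
    · subst hi
      have e1 : ∀ t, z (hinv.toPerm _ (i, Sum.inl t)) =
          z (i, Sum.inl (fun k => xor (t k) (a k))) := by
        intro t; simp [Function.Involutive.toPerm]
      have e2 : ∀ t, z (hinv.toPerm _ (i, Sum.inr t)) =
          z (i, Sum.inr (fun k => xor (t k) (a k))) := by
        intro t; simp [Function.Involutive.toPerm]
      simp only [Hb, e1, e2, Equiv.refl_apply]
      exact (hshiftL (fun t => z (i, Sum.inl t))
          (fun t => z (i, Sum.inr (fun k => xor (t k) (a k)))) a).trans
        (hshiftR (fun t => z (i, Sum.inl t)) (fun t => z (i, Sum.inr t)) a)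
    · have e1 : ∀ t, z (hinv.toPerm _ (i, Sum.inl t)) = z (i, Sum.inl t) := by
        intro t; simp [Function.Involutive.toPerm, hi]
      have e2 : ∀ t, z (hinv.toPerm _ (i, Sum.inr t)) = z (i, Sum.inr t) := by
        intro t; simp [Function.Involutive.toPerm, hi]
      simp only [Hb, e1, e2, Equiv.refl_apply]
  -- composition of invariant permutations
  have comp : ∀ (σ τ : Equiv.Perm (Fin (2 ^ m) × ((Fin m → Bool) ⊕ (Fin m → Bool)))),
      (∀ z, F (fun a => z (σ a)) = F z) →
      (∀ z, F (fun a => z (τ a)) = F z) →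
      ∀ z, F (fun a => z ((σ.trans τ) a)) = F z := by
    intro σ τ hσ hτ z
    have := hσ (fun b => z (τ b))
    simpa using this.trans (hτ z)
  -- main construction
  rintro ⟨i, u⟩ ⟨j, v⟩
  obtain ⟨σ₁, hσ₁v, hσ₁⟩ := gen1 (Equiv.swap i j)
  obtain ⟨σ₂, hσ₂v, hσ₂⟩ := gen2 i
  rcases u with t₁ | t₁ <;> rcases v with t₂ | t₂
  · obtain ⟨σ₃, hσ₃v, hσ₃⟩ := gen3 i (fun k => xor (t₁ k) (t₂ k))
    refine ⟨σ₃.trans σ₁, ?_, comp _ _ hσ₃ hσ₁⟩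
    show σ₁ (σ₃ (i, Sum.inl t₁)) = (j, Sum.inl t₂)
    rw [hσ₃v, if_pos rfl, hσ₁v]
    have e : (fun k => xor (t₁ k) (xor (t₁ k) (t₂ k))) = t₂ := by
      funext k; cases t₁ k <;> cases t₂ k <;> rfl
    simp only [Sum.map_inl, e]
    rw [Equiv.swap_apply_left]
  · obtain ⟨σ₃, hσ₃v, hσ₃⟩ := gen3 i (fun k => xor (t₁ k) (t₂ k))
    refine ⟨(σ₃.trans σ₂).trans σ₁, ?_, comp _ _ (comp _ _ hσ₃ hσ₂) hσ₁⟩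
    show σ₁ (σ₂ (σ₃ (i, Sum.inl t₁))) = (j, Sum.inr t₂)
    rw [hσ₃v, if_pos rfl]
    simp only [Sum.map_inl]
    rw [hσ₂v, if_pos rfl]
    simp only [Sum.swap_inl]
    rw [hσ₁v]
    have e : (fun k => xor (t₁ k) (xor (t₁ k) (t₂ k))) = t₂ := by
      funext k; cases t₁ k <;> cases t₂ k <;> rfl
    simp only [e]
    rw [Equiv.swap_apply_left]
  · obtain ⟨σ₃, hσ₃v, hσ₃⟩ := gen3 i (fun k => xor (t₁ k) (t₂ k))
    refine ⟨(σ₃.trans σ₂).trans σ₁, ?_, comp _ _ (comp _ _ hσ₃ hσ₂) hσ₁⟩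
    show σ₁ (σ₂ (σ₃ (i, Sum.inr t₁))) = (j, Sum.inl t₂)
    rw [hσ₃v, if_pos rfl]
    simp only [Sum.map_inr]
    rw [hσ₂v, if_pos rfl]
    simp only [Sum.swap_inr]
    rw [hσ₁v]
    have e : (fun k => xor (t₁ k) (xor (t₁ k) (t₂ k))) = t₂ := by
      funext k; cases t₁ k <;> cases t₂ k <;> rfl
    simp only [e]
    rw [Equiv.swap_apply_left]
  · obtain ⟨σ₃, hσ₃v, hσ₃⟩ := gen3 i (fun k => xor (t₁ k) (t₂ k))
    refine ⟨σ₃.trans σ₁, ?_, comp _ _ hσ₃ hσ₁⟩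
    show σ₁ (σ₃ (i, Sum.inr t₁)) = (j, Sum.inr t₂)
    rw [hσ₃v, if_pos rfl, hσ₁v]
    have e : (fun k => xor (t₁ k) (xor (t₁ k) (t₂ k))) = t₂ := by
      funext k; cases t₁ k <;> cases t₂ k <;> rfl
    simp only [Sum.map_inr, e]
    rw [Equiv.swap_apply_left]
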